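/- The complete bipartite graph K_{2,t} with t ≥ 2 is γ-(t+1)-critical: subdividing any t+1 edges increases the domination number, while some set of t edges can be subdivided without increasing it. -/
import Mathlib


open SimpleGraph

/-- `D` is a dominating set of `G`. -/
def SimpleGraph.IsDomSet {V : Type*} (G : SimpleGraph V) (D : Set V) : Prop :=
  ∀ v ∉ D, ∃ u ∈ D, G.Adj u v

/-- The domination number of `G`. -/
noncomputable def SimpleGraph.domNum {V : Type*} [Fintype V] (G : SimpleGraph V) : ℕ :=
  sInf {k | ∃ D : Finset V, D.card = k ∧ G.IsDomSet ↑D}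

/-- The graph obtained from `G` by subdividing each edge in `F` once: each `e ∈ F`
contributes a new vertex adjacent to the two endpoints of `e`, and the edges of `F`
are removed. -/
def SimpleGraph.subdiv {V : Type*} (G : SimpleGraph V) (F : Finset (Sym2 V)) :
    SimpleGraph (V ⊕ {e : Sym2 V // e ∈ F}) :=
  SimpleGraph.fromRel (fun a b => match a, b with
    | Sum.inl u, Sum.inl v => G.Adj u v ∧ s(u, v) ∉ F
    | Sum.inl u, Sum.inr e => u ∈ (e : Sym2 V)
    | _, _ => False)

/-- `G` is `γ`-`q`-critical: subdividing any `q` edges increases the domination number,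
while some set of `q - 1` edges can be subdivided without increasing it. -/
def SimpleGraph.IsQCritical {V : Type*} [Fintype V] (G : SimpleGraph V) (q : ℕ) : Prop :=
  (∀ F : Finset (Sym2 V), ↑F ⊆ G.edgeSet → F.card = q →
      G.domNum < (G.subdiv F).domNum) ∧
  (∃ F : Finset (Sym2 V), ↑F ⊆ G.edgeSet ∧ F.card = q - 1 ∧
      (G.subdiv F).domNum = G.domNum)

section helpers
variable {V : Type*} (G : SimpleGraph V) (F : Finset (Sym2 V))

lemma subdiv_adj_inl_inl (u v : V) :
    (G.subdiv F).Adj (Sum.inl u) (Sum.inl v) ↔ G.Adj u v ∧ s(u,v) ∉ F := by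
  constructor
  · rintro ⟨hne, h | h⟩
    · exact h
    · exact ⟨h.1.symm, by rw [Sym2.eq_swap]; exact h.2⟩
  · intro h
    exact ⟨by simp [h.1.ne], Or.inl h⟩

lemma subdiv_adj_inl_inr (u : V) (e : {e : Sym2 V // e ∈ F}) :
    (G.subdiv F).Adj (Sum.inl u) (Sum.inr e) ↔ u ∈ (e : Sym2 V) := by
  constructor
  · rintro ⟨hne, h | h⟩
    · exact h
    · exact h.elim
  · intro h; exact ⟨by simp, Or.inl h⟩

lemma subdiv_not_adj_inr_inr (e f : {e : Sym2 V // e ∈ F}) :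
    ¬ (G.subdiv F).Adj (Sum.inr e) (Sum.inr f) := by
  rintro ⟨hne, h | h⟩ <;> exact h

lemma subdiv_adj_inr (z : V ⊕ {e : Sym2 V // e ∈ F}) (e : {e : Sym2 V // e ∈ F})
    (h : (G.subdiv F).Adj z (Sum.inr e)) : ∃ u ∈ (e : Sym2 V), z = Sum.inl u := by
  rcases z with u | f
  · exact ⟨u, (subdiv_adj_inl_inr G F u e).mp h, rfl⟩
  · exact absurd h (subdiv_not_adj_inr_inr G F f e)

lemma isDomSet_univ {W : Type*} [Fintype W] (H : SimpleGraph W) :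
    H.IsDomSet ↑(Finset.univ : Finset W) :=
  fun v hv => absurd (Finset.mem_coe.mpr (Finset.mem_univ v)) hv

lemma domNum_le {W : Type*} [Fintype W] (H : SimpleGraph W) (D : Finset W)
    (hD : H.IsDomSet ↑D) : H.domNum ≤ D.card :=
  Nat.sInf_le ⟨D, rfl, hD⟩

lemma le_domNum {W : Type*} [Fintype W] (H : SimpleGraph W) (n : ℕ)
    (h : ∀ D : Finset W, H.IsDomSet ↑D → n ≤ D.card) : n ≤ H.domNum := by
  have hne : {k | ∃ D : Finset W, D.card = k ∧ H.IsDomSet ↑D}.Nonempty :=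
    ⟨_, Finset.univ, rfl, isDomSet_univ H⟩
  obtain ⟨D, hc, hd⟩ := Nat.sInf_mem hne
  exact le_of_le_of_eq (h D hd) hc

lemma two_le_of_dom {W : Type*} [DecidableEq W] [Nonempty W] (H : SimpleGraph W)
    (h : ∀ x : W, ∃ v, v ≠ x ∧ ¬ H.Adj x v) (D : Finset W) (hD : H.IsDomSet ↑D) :
    2 ≤ D.card := by
  by_contra hc
  push_neg at hc
  obtain ⟨x, hx⟩ := Finset.card_le_one_iff_subset_singleton.mp (by omega : D.card ≤ 1)
  obtain ⟨v, hvx, hnadj⟩ := h x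
  have hvD : v ∉ (↑D : Set W) := fun hv => hvx (by simpa using hx hv)
  obtain ⟨u, hu, hadj⟩ := hD v hvD
  have : u = x := by simpa using hx hu
  exact hnadj (this ▸ hadj)

lemma subset_pair_of_card_le_two {α : Type*} [DecidableEq α] [Nonempty α] (s : Finset α)
    (h : s.card ≤ 2) : ∃ x y, s ⊆ {x, y} := by
  interval_cases hc : s.card
  · obtain ⟨x⟩ := ‹Nonempty α›
    exact ⟨x, x, by simp [Finset.card_eq_zero.mp hc]⟩
  · obtain ⟨x, hx⟩ := Finset.card_eq_one.mp hc
    exact ⟨x, x, by simp [hx]⟩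
  · obtain ⟨x, y, _, hxy⟩ := Finset.card_eq_two.mp hc
    exact ⟨x, y, by simp [hxy]⟩

lemma three_le_of_dom {W : Type*} [DecidableEq W] [Nonempty W] (H : SimpleGraph W)
    (h : ∀ x y : W, ¬ ∀ v, v = x ∨ v = y ∨ H.Adj x v ∨ H.Adj y v)
    (D : Finset W) (hD : H.IsDomSet ↑D) : 3 ≤ D.card := by
  by_contra hc
  push_neg at hc
  obtain ⟨x, y, hxy⟩ := subset_pair_of_card_le_two D (by omega)
  refine h x y (fun v => ?_)
  by_cases hv : v ∈ (↑D : Set W)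
  · have := hxy hv
    simp only [Finset.mem_insert, Finset.mem_singleton] at this
    tauto
  · obtain ⟨u, hu, hadj⟩ := hD v hv
    have := hxy hu
    simp only [Finset.mem_insert, Finset.mem_singleton] at this
    rcases this with rfl | rfl
    · exact Or.inr (Or.inr (Or.inl hadj))
    · exact Or.inr (Or.inr (Or.inr hadj))

end helpers

section bip
open Sum
variable {t : ℕ}

abbrev V2 (t : ℕ) := Fin 2 ⊕ Fin t
abbrev Gbip (t : ℕ) : SimpleGraph (V2 t) := completeBipartiteGraph (Fin 2) (Fin t)

def other (i : Fin 2) : Fin 2 := if i = 0 then 1 else 0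

lemma other_ne (i : Fin 2) : other i ≠ i := by fin_cases i <;> simp [other]

lemma eq_other_of_ne {i i' : Fin 2} (h : i' ≠ i) : i' = other i := by
  fin_cases i <;> fin_cases i' <;> simp_all [other]

lemma exists_ne_fin (ht : 2 ≤ t) (j : Fin t) : ∃ k : Fin t, k ≠ j := by
  rcases Nat.eq_zero_or_pos j.val with h | h
  · exact ⟨⟨1, by omega⟩, by simp [Fin.ext_iff]; omega⟩
  · exact ⟨⟨0, by omega⟩, by simp [Fin.ext_iff]; omega⟩

lemma edge_form (e : Sym2 (V2 t)) (he : e ∈ (Gbip t).edgeSet) :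
    ∃ i j, e = s(Sum.inl i, Sum.inr j) := by
  induction e with
  | _ a b =>
    rw [SimpleGraph.mem_edgeSet] at he
    rcases a with i | j <;> rcases b with i' | j'
    · simp at he
    · exact ⟨i, j', rfl⟩
    · exact ⟨i', j, Sym2.eq_swap⟩
    · simp at he

lemma bip_adj (i : Fin 2) (j : Fin t) : (Gbip t).Adj (inl i) (inr j) := by simp

lemma not_bip_adj_ll (i i' : Fin 2) : ¬ (Gbip t).Adj (inl i) (inl i') := by simp

lemma not_bip_adj_rr (j j' : Fin t) : ¬ (Gbip t).Adj (inr j) (inr j') := by simp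

lemma pigeonhole (ht : 2 ≤ t) (F : Finset (Sym2 (V2 t)))
    (hF : ↑F ⊆ (Gbip t).edgeSet) (hcard : F.card = t + 1) :
    ∃ j : Fin t, s((inl 0 : V2 t), inr j) ∈ F ∧ s((inl 1 : V2 t), inr j) ∈ F := by
  classical
  have htpos : 0 < t := by omega
  set g : Sym2 (V2 t) → Fin t := fun e =>
    if h : ∃ j : Fin t, (inr j : V2 t) ∈ e then h.choose else ⟨0, htpos⟩ with hg
  have hlt : (Finset.univ : Finset (Fin t)).card < F.card := by
    simp [hcard]
  obtain ⟨e, he, e', he', hne, heq⟩ :=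
    Finset.exists_ne_map_eq_of_card_lt_of_maps_to hlt (fun e _ => Finset.mem_univ (g e))
  obtain ⟨i, j, rfl⟩ := edge_form e (hF he)
  obtain ⟨i', j', rfl⟩ := edge_form e' (hF he')
  have hgval : ∀ (a : Fin 2) (b : Fin t), g s((inl a : V2 t), inr b) = b := by
    intro a b
    have hex : ∃ j : Fin t, (inr j : V2 t) ∈ s((inl a : V2 t), inr b) := ⟨b, by simp⟩
    have h1 : g s((inl a : V2 t), inr b) = hex.choose := dif_pos hex
    have key : ∀ c : Fin t, (inr c : V2 t) ∈ s((inl a : V2 t), inr b) → c = b := by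
      intro c hc
      simpa using hc
    exact h1.trans (key _ hex.choose_spec)
  rw [hgval, hgval] at heq
  subst heq
  have hii : i ≠ i' := by
    rintro rfl; exact hne rfl
  fin_cases i <;> fin_cases i' <;> simp_all
  · exact ⟨j, he, he'⟩
  · exact ⟨j, he', he⟩

lemma domNum_bip (ht : 2 ≤ t) : (Gbip t).domNum = 2 := by
  classical
  refine le_antisymm ?_ ?_
  · have hD : (Gbip t).IsDomSet ↑({inl 0, inl 1} : Finset (V2 t)) := by
      intro v hv
      rcases v with i | j
      · exact absurd (by fin_cases i <;> simp) hv
      · exact ⟨inl 0, by simp, bip_adj 0 j⟩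
    calc (Gbip t).domNum ≤ _ := domNum_le _ _ hD
      _ ≤ 2 := Finset.card_le_two ..
  · refine le_domNum _ 2 (fun D hD => two_le_of_dom _ ?_ D hD)
    intro x
    rcases x with i | j
    · exact ⟨inl (other i), by simp [other_ne i], not_bip_adj_ll i (other i)⟩
    · obtain ⟨k, hk⟩ := exists_ne_fin ht j
      exact ⟨inr k, by simp [hk], not_bip_adj_rr j k⟩

end bip

section main
open Sum Finset
variable {t : ℕ}

lemma cover (F : Finset (Sym2 (V2 t)))
    (x y : V2 t ⊕ {e : Sym2 (V2 t) // e ∈ F})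
    (hDom : ∀ v, v = x ∨ v = y ∨ ((Gbip t).subdiv F).Adj x v ∨ ((Gbip t).subdiv F).Adj y v)
    {e : Sym2 (V2 t)} (he : e ∈ F) :
    ((x = Sum.inr ⟨e, he⟩) ∨ ∃ u ∈ e, x = Sum.inl u) ∨
    ((y = Sum.inr ⟨e, he⟩) ∨ ∃ u ∈ e, y = Sum.inl u) := by
  rcases hDom (Sum.inr ⟨e, he⟩) with h | h | h | h
  · exact Or.inl (Or.inl h.symm)
  · exact Or.inr (Or.inl h.symm)
  · exact Or.inl (Or.inr (subdiv_adj_inr _ _ _ _ h))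
  · exact Or.inr (Or.inr (subdiv_adj_inr _ _ _ _ h))

lemma caseLL (ht : 2 ≤ t) (F : Finset (Sym2 (V2 t)))
    (hF : ↑F ⊆ (Gbip t).edgeSet) (hcard : F.card = t + 1) (i i' : Fin 2)
    (hDom : ∀ v, v = Sum.inl (inl i) ∨ v = Sum.inl (inl i') ∨
      ((Gbip t).subdiv F).Adj (Sum.inl (inl i)) v ∨
      ((Gbip t).subdiv F).Adj (Sum.inl (inl i')) v) : False := by
  obtain ⟨j, hj0, hj1⟩ := pigeonhole ht F hF hcard
  have hj : ∀ a : Fin 2, s((inl a : V2 t), inr j) ∈ F := by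
    intro a; fin_cases a <;> assumption
  rcases hDom (Sum.inl (inr j)) with h | h | h | h
  · simp at h
  · simp at h
  · rw [subdiv_adj_inl_inl] at h; exact h.2 (hj i)
  · rw [subdiv_adj_inl_inl] at h; exact h.2 (hj i')

lemma caseLB (ht : 2 ≤ t) (F : Finset (Sym2 (V2 t)))
    (hF : ↑F ⊆ (Gbip t).edgeSet) (hcard : F.card = t + 1) (i : Fin 2) (j : Fin t)
    (hDom : ∀ v, v = Sum.inl (inl i) ∨ v = Sum.inl (inr j) ∨
      ((Gbip t).subdiv F).Adj (Sum.inl (inl i)) v ∨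
      ((Gbip t).subdiv F).Adj (Sum.inl (inr j)) v) : False := by
  classical
  set E' : Finset (Sym2 (V2 t)) :=
    insert s((inl (other i) : V2 t), inr j)
      (Finset.univ.image fun k : Fin t => s((inl i : V2 t), inr k)) with hE'
  have hnotmem : s((inl (other i) : V2 t), inr j) ∉
      (Finset.univ.image fun k : Fin t => s((inl i : V2 t), inr k)) := by
    simp only [mem_image, mem_univ, true_and]
    rintro ⟨k, hk⟩
    rw [Sym2.eq_iff] at hk
    rcases hk with ⟨h1, _⟩ | ⟨h1, _⟩
    · exact other_ne i (Sum.inl.inj h1).symm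
    · simp at h1
  have himg : (Finset.univ.image fun k : Fin t => s((inl i : V2 t), inr k)).card = t := by
    rw [Finset.card_image_of_injective _ (fun a b hab => by
      rw [Sym2.eq_iff] at hab
      rcases hab with ⟨_, h2⟩ | ⟨h1, _⟩
      · exact Sum.inr.inj h2
      · simp at h1)]
    simp
  have hcardE : E'.card = t + 1 := by rw [hE', Finset.card_insert_of_notMem hnotmem, himg]
  have hsub : F ⊆ E' := by
    intro e he
    obtain ⟨i'', k, rfl⟩ := edge_form e (hF he)
    rcases cover F _ _ hDom he with (hx | ⟨u, hu, hxu⟩) | (hy | ⟨u, hu, hyu⟩)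
    · simp at hx
    · have hu' : u = Sum.inl i := (Sum.inl.inj hxu).symm
      subst hu'
      simp only [Sym2.mem_iff] at hu
      rcases hu with hu | hu
      · obtain rfl : i = i'' := Sum.inl.inj hu
        exact mem_insert_of_mem (mem_image_of_mem _ (mem_univ k))
      · exact absurd hu (by simp)
    · simp at hy
    · have hu' : u = Sum.inr j := (Sum.inl.inj hyu).symm
      subst hu'
      simp only [Sym2.mem_iff] at hu
      rcases hu with hu | hu
      · exact absurd hu (by simp)
      · obtain rfl : j = k := Sum.inr.inj hu
        by_cases hii : i'' = i
        · subst hii; exact mem_insert_of_mem (mem_image_of_mem _ (mem_univ j))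
        · rw [eq_other_of_ne hii]; exact mem_insert_self _ _
  have hFE : F = E' := Finset.eq_of_subset_of_card_le hsub (by rw [hcardE, hcard])
  have hmem : s((inl (other i) : V2 t), inr j) ∈ F := by rw [hFE]; exact mem_insert_self _ _
  rcases hDom (Sum.inl (inl (other i))) with h | h | h | h
  · exact other_ne i (Sum.inl.inj (Sum.inl.inj h))
  · simp at h
  · rw [subdiv_adj_inl_inl] at h; exact not_bip_adj_ll _ _ h.1
  · rw [subdiv_adj_inl_inl] at h; exact h.2 (Sym2.eq_swap ▸ hmem)

end main

section main2
open Sum Finset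
variable {t : ℕ}

lemma caseLW (ht : 2 ≤ t) (F : Finset (Sym2 (V2 t)))
    (hF : ↑F ⊆ (Gbip t).edgeSet) (hcard : F.card = t + 1) (i : Fin 2)
    (s0 : {e : Sym2 (V2 t) // e ∈ F})
    (hDom : ∀ v, v = Sum.inl (inl i) ∨ v = Sum.inr s0 ∨
      ((Gbip t).subdiv F).Adj (Sum.inl (inl i)) v ∨
      ((Gbip t).subdiv F).Adj (Sum.inr s0) v) : False := by
  classical
  obtain ⟨i0, j0, hs0⟩ := edge_form s0.val (hF s0.prop)
  set Img : Finset (Sym2 (V2 t)) :=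
    Finset.univ.image fun k : Fin t => s((inl i : V2 t), inr k) with hImg
  have himg : Img.card = t := by
    rw [hImg, Finset.card_image_of_injective _ (fun a b hab => by
      rw [Sym2.eq_iff] at hab
      rcases hab with ⟨_, h2⟩ | ⟨h1, _⟩
      · exact Sum.inr.inj h2
      · simp at h1)]
    simp
  set E' : Finset (Sym2 (V2 t)) := insert s0.val Img with hE'
  have hsub : F ⊆ E' := by
    intro e he
    obtain ⟨i'', k, rfl⟩ := edge_form e (hF he)
    rcases cover F _ _ hDom he with (hx | ⟨u, hu, hxu⟩) | (hy | ⟨u, hu, hyu⟩)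
    · simp at hx
    · have hu' : u = Sum.inl i := (Sum.inl.inj hxu).symm
      subst hu'
      simp only [Sym2.mem_iff] at hu
      rcases hu with hu | hu
      · obtain rfl : i = i'' := Sum.inl.inj hu
        exact mem_insert_of_mem (mem_image_of_mem _ (mem_univ k))
      · exact absurd hu (by simp)
    · obtain rfl : s0 = ⟨_, he⟩ := Sum.inr.inj hy
      exact mem_insert_self _ _
    · simp at hyu
  have hle : t + 1 ≤ E'.card := by rw [← hcard]; exact Finset.card_le_card hsub
  have hnotmem : s0.val ∉ Img := by
    intro hmem
    rw [hE', Finset.insert_eq_self.mpr hmem, himg] at hle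
    omega
  have hcardE : E'.card = t + 1 := by rw [hE', Finset.card_insert_of_notMem hnotmem, himg]
  have hFE : F = E' := Finset.eq_of_subset_of_card_le hsub (by rw [hcardE, hcard])
  have hii : i0 ≠ i := by
    rintro rfl
    exact hnotmem (by rw [hs0]; exact mem_image_of_mem _ (mem_univ j0))
  obtain ⟨k, hk⟩ := exists_ne_fin ht j0
  have hmemF : s((inl i : V2 t), inr k) ∈ F := by
    rw [hFE]; exact mem_insert_of_mem (mem_image_of_mem _ (mem_univ k))
  rcases hDom (Sum.inl (inr k)) with h | h | h | h
  · simp at h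
  · simp at h
  · rw [subdiv_adj_inl_inl] at h; exact h.2 hmemF
  · obtain ⟨u, hu, hul⟩ := subdiv_adj_inr _ _ _ _ h.symm
    have : u = Sum.inr k := (Sum.inl.inj hul).symm
    subst this
    rw [hs0] at hu
    simp only [Sym2.mem_iff] at hu
    rcases hu with hu | hu
    · simp at hu
    · exact hk (Sum.inr.inj hu)

lemma caseBB (ht : 2 ≤ t) (F : Finset (Sym2 (V2 t)))
    (hF : ↑F ⊆ (Gbip t).edgeSet) (hcard : F.card = t + 1) (j j' : Fin t)
    (hDom : ∀ v, v = Sum.inl (inr j) ∨ v = Sum.inl (inr j') ∨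
      ((Gbip t).subdiv F).Adj (Sum.inl (inr j)) v ∨
      ((Gbip t).subdiv F).Adj (Sum.inl (inr j')) v) : False := by
  classical
  set E4 : Finset (Sym2 (V2 t)) :=
    {s((inl 0 : V2 t), inr j), s((inl 1 : V2 t), inr j),
     s((inl 0 : V2 t), inr j'), s((inl 1 : V2 t), inr j')} with hE4
  have hsub : F ⊆ E4 := by
    intro e he
    obtain ⟨i'', k, rfl⟩ := edge_form e (hF he)
    have hk : k = j ∨ k = j' := by
      rcases cover F _ _ hDom he with (hx | ⟨u, hu, hxu⟩) | (hy | ⟨u, hu, hyu⟩)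
      · simp at hx
      · have hu' : u = Sum.inr j := (Sum.inl.inj hxu).symm
        subst hu'
        simp only [Sym2.mem_iff] at hu
        rcases hu with hu | hu
        · simp at hu
        · exact Or.inl (Sum.inr.inj hu).symm
      · simp at hy
      · have hu' : u = Sum.inr j' := (Sum.inl.inj hyu).symm
        subst hu'
        simp only [Sym2.mem_iff] at hu
        rcases hu with hu | hu
        · simp at hu
        · exact Or.inr (Sum.inr.inj hu).symm
    rcases hk with rfl | rfl <;> fin_cases i'' <;> simp [hE4]
  have hE4card : E4.card ≤ 4 := by
    refine (Finset.card_insert_le _ _).trans (Nat.succ_le_succ ?_)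
    refine (Finset.card_insert_le _ _).trans (Nat.succ_le_succ ?_)
    refine (Finset.card_insert_le _ _).trans (Nat.succ_le_succ ?_)
    simp
  by_cases hjj : j = j'
  · subst hjj
    have hsub2 : F ⊆ {s((inl 0 : V2 t), inr j), s((inl 1 : V2 t), inr j)} := by
      intro e he
      have := hsub he
      simp only [hE4, mem_insert, mem_singleton] at this ⊢
      tauto
    have := Finset.card_le_card hsub2
    have h2 : ({s((inl 0 : V2 t), inr j), s((inl 1 : V2 t), inr j)} : Finset _).card ≤ 2 :=
      (Finset.card_insert_le _ _).trans (by simp)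
    omega
  · have hsd : (E4 \ F).card = E4.card - F.card := Finset.card_sdiff_of_subset hsub
    have hsd1 : (E4 \ F).card ≤ 1 := by
      have := Finset.card_le_card hsub
      omega
    have claim : ∃ i : Fin 2, s((inl i : V2 t), inr j) ∈ F ∧ s((inl i : V2 t), inr j') ∈ F := by
      by_contra hcon
      push_neg at hcon
      have h0 : ∃ kk : Fin t, s((inl 0 : V2 t), inr kk) ∈ E4 \ F ∧ (kk = j ∨ kk = j') := by
        by_cases hm : s((inl 0 : V2 t), inr j) ∈ F
        · exact ⟨j', mem_sdiff.mpr ⟨by simp [hE4], hcon 0 hm⟩, Or.inr rfl⟩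
        · exact ⟨j, mem_sdiff.mpr ⟨by simp [hE4], hm⟩, Or.inl rfl⟩
      have h1 : ∃ kk : Fin t, s((inl 1 : V2 t), inr kk) ∈ E4 \ F ∧ (kk = j ∨ kk = j') := by
        by_cases hm : s((inl 1 : V2 t), inr j) ∈ F
        · exact ⟨j', mem_sdiff.mpr ⟨by simp [hE4], hcon 1 hm⟩, Or.inr rfl⟩
        · exact ⟨j, mem_sdiff.mpr ⟨by simp [hE4], hm⟩, Or.inl rfl⟩
      obtain ⟨k0, hk0, -⟩ := h0
      obtain ⟨k1, hk1, -⟩ := h1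
      have hne : s((inl 0 : V2 t), inr k0) ≠ s((inl 1 : V2 t), inr k1) := by
        intro hh
        rw [Sym2.eq_iff] at hh
        rcases hh with ⟨h1, _⟩ | ⟨h1, _⟩ <;> simp at h1
      have hsubp : ({s((inl 0 : V2 t), inr k0), s((inl 1 : V2 t), inr k1)} : Finset _) ⊆ E4 \ F := by
        intro e he
        simp only [mem_insert, mem_singleton] at he
        rcases he with rfl | rfl <;> assumption
      have := Finset.card_le_card hsubp
      rw [Finset.card_insert_of_notMem (by simpa using hne), Finset.card_singleton] at this
      omega
    obtain ⟨i, hij, hij'⟩ := claim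
    rcases hDom (Sum.inl (inl i)) with h | h | h | h
    · simp at h
    · simp at h
    · rw [subdiv_adj_inl_inl] at h; exact h.2 (Sym2.eq_swap ▸ hij)
    · rw [subdiv_adj_inl_inl] at h; exact h.2 (Sym2.eq_swap ▸ hij')

lemma caseBW (ht : 2 ≤ t) (F : Finset (Sym2 (V2 t)))
    (hF : ↑F ⊆ (Gbip t).edgeSet) (hcard : F.card = t + 1) (j : Fin t)
    (s0 : {e : Sym2 (V2 t) // e ∈ F})
    (hDom : ∀ v, v = Sum.inl (inr j) ∨ v = Sum.inr s0 ∨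
      ((Gbip t).subdiv F).Adj (Sum.inl (inr j)) v ∨
      ((Gbip t).subdiv F).Adj (Sum.inr s0) v) : False := by
  classical
  obtain ⟨i0, j0, hs0⟩ := edge_form s0.val (hF s0.prop)
  set E3 : Finset (Sym2 (V2 t)) :=
    {s((inl 0 : V2 t), inr j), s((inl 1 : V2 t), inr j), s0.val} with hE3
  have hsub : F ⊆ E3 := by
    intro e he
    obtain ⟨i'', k, rfl⟩ := edge_form e (hF he)
    rcases cover F _ _ hDom he with (hx | ⟨u, hu, hxu⟩) | (hy | ⟨u, hu, hyu⟩)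
    · simp at hx
    · have hu' : u = Sum.inr j := (Sum.inl.inj hxu).symm
      subst hu'
      simp only [Sym2.mem_iff] at hu
      rcases hu with hu | hu
      · simp at hu
      · obtain rfl : j = k := Sum.inr.inj hu
        fin_cases i'' <;> simp [hE3]
    · obtain rfl : s0 = ⟨_, he⟩ := Sum.inr.inj hy
      simp [hE3]
    · simp at hyu
  have hE3card : E3.card ≤ 3 := by
    refine (Finset.card_insert_le _ _).trans (Nat.succ_le_succ ?_)
    refine (Finset.card_insert_le _ _).trans (Nat.succ_le_succ ?_)
    simp
  have hFE : F = E3 := Finset.eq_of_subset_of_card_le hsub (by omega)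
  have hjF : ∀ a : Fin 2, s((inl a : V2 t), inr j) ∈ F := by
    intro a
    rw [hFE]
    fin_cases a <;> simp [hE3]
  rcases hDom (Sum.inl (inl (other i0))) with h | h | h | h
  · simp at h
  · simp at h
  · rw [subdiv_adj_inl_inl] at h; exact h.2 (Sym2.eq_swap ▸ hjF (other i0))
  · obtain ⟨u, hu, hul⟩ := subdiv_adj_inr _ _ _ _ h.symm
    have : u = Sum.inl (other i0) := (Sum.inl.inj hul).symm
    subst this
    rw [hs0] at hu
    simp only [Sym2.mem_iff] at hu
    rcases hu with hu | hu
    · exact other_ne i0 (Sum.inl.inj hu)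
    · simp at hu

lemma caseWW (ht : 2 ≤ t) (F : Finset (Sym2 (V2 t)))
    (hF : ↑F ⊆ (Gbip t).edgeSet) (hcard : F.card = t + 1)
    (s0 s1 : {e : Sym2 (V2 t) // e ∈ F})
    (hDom : ∀ v, v = Sum.inr s0 ∨ v = Sum.inr s1 ∨
      ((Gbip t).subdiv F).Adj (Sum.inr s0) v ∨
      ((Gbip t).subdiv F).Adj (Sum.inr s1) v) : False := by
  classical
  have hsub : F ⊆ {s0.val, s1.val} := by
    intro e he
    rcases cover F _ _ hDom he with (hx | ⟨u, hu, hxu⟩) | (hy | ⟨u, hu, hyu⟩)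
    · obtain rfl : s0 = ⟨_, he⟩ := Sum.inr.inj hx
      simp
    · simp at hxu
    · obtain rfl : s1 = ⟨_, he⟩ := Sum.inr.inj hy
      simp
    · simp at hyu
  have := Finset.card_le_card hsub
  have h2 : ({s0.val, s1.val} : Finset _).card ≤ 2 := (Finset.card_insert_le _ _).trans (by simp)
  omega

end main2

section assemble
open Sum Finset
variable {t : ℕ}

lemma noPair (ht : 2 ≤ t) (F : Finset (Sym2 (V2 t)))
    (hF : ↑F ⊆ (Gbip t).edgeSet) (hcard : F.card = t + 1)
    (x y : V2 t ⊕ {e : Sym2 (V2 t) // e ∈ F}) :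
    ¬ ∀ v, v = x ∨ v = y ∨ ((Gbip t).subdiv F).Adj x v ∨ ((Gbip t).subdiv F).Adj y v := by
  intro hDom
  have hDom' : ∀ v, v = y ∨ v = x ∨ ((Gbip t).subdiv F).Adj y v ∨ ((Gbip t).subdiv F).Adj x v :=
    fun v => by have := hDom v; tauto
  rcases x with (i | j) | s <;> rcases y with (i' | j') | s'
  · exact caseLL ht F hF hcard i i' hDom
  · exact caseLB ht F hF hcard i j' hDom
  · exact caseLW ht F hF hcard i s' hDom
  · exact caseLB ht F hF hcard i' j hDom'
  · exact caseBB ht F hF hcard j j' hDom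
  · exact caseBW ht F hF hcard j s' hDom
  · exact caseLW ht F hF hcard i' s hDom'
  · exact caseBW ht F hF hcard j' s hDom'
  · exact caseWW ht F hF hcard s s' hDom

def F0 (t : ℕ) : Finset (Sym2 (V2 t)) :=
  Finset.univ.image fun j : Fin t => s((inl 0 : V2 t), inr j)

lemma F0_sub : ↑(F0 t) ⊆ (Gbip t).edgeSet := by
  intro e he
  simp only [F0, coe_image, Set.mem_image] at he
  obtain ⟨j, -, rfl⟩ := he
  simp [SimpleGraph.mem_edgeSet]

lemma F0_card : (F0 t).card = t := by
  rw [F0, Finset.card_image_of_injective _ (fun a b hab => by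
    rw [Sym2.eq_iff] at hab
    rcases hab with ⟨_, h2⟩ | ⟨h1, _⟩
    · exact Sum.inr.inj h2
    · simp at h1)]
  simp

lemma F0_mem {e : Sym2 (V2 t)} (he : e ∈ F0 t) : ∃ j : Fin t, e = s((inl 0 : V2 t), inr j) := by
  simp only [F0, mem_image, mem_univ, true_and] at he
  obtain ⟨j, rfl⟩ := he
  exact ⟨j, rfl⟩

lemma subdiv_F0_domNum (ht : 2 ≤ t) : ((Gbip t).subdiv (F0 t)).domNum = 2 := by
  classical
  refine le_antisymm ?_ ?_
  · have hD : ((Gbip t).subdiv (F0 t)).IsDomSet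
        ↑({Sum.inl (inl 0), Sum.inl (inl 1)} : Finset (V2 t ⊕ {e // e ∈ F0 t})) := by
      intro v hv
      rcases v with (i | j) | s
      · exact absurd (show (Sum.inl (inl i) : V2 t ⊕ {e // e ∈ F0 t}) ∈ _ by
          fin_cases i <;> simp) hv
      · refine ⟨Sum.inl (inl 1), by simp, ?_⟩
        rw [subdiv_adj_inl_inl]
        refine ⟨bip_adj 1 j, fun hmem => ?_⟩
        obtain ⟨k, hk⟩ := F0_mem hmem
        rw [Sym2.eq_iff] at hk
        rcases hk with ⟨h1, _⟩ | ⟨h1, _⟩ <;> simp at h1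
      · refine ⟨Sum.inl (inl 0), by simp, ?_⟩
        rw [subdiv_adj_inl_inr]
        obtain ⟨k, hk⟩ := F0_mem s.prop
        rw [hk]; simp
    calc ((Gbip t).subdiv (F0 t)).domNum ≤ _ := domNum_le _ _ hD
      _ ≤ 2 := Finset.card_le_two ..
  · refine le_domNum _ 2 (fun D hD => two_le_of_dom _ ?_ D hD)
    intro x
    rcases x with (i | j) | s
    · refine ⟨Sum.inl (inl (other i)), by simp [other_ne i], fun h => ?_⟩
      rw [subdiv_adj_inl_inl] at h
      exact not_bip_adj_ll _ _ h.1
    · obtain ⟨k, hk⟩ := exists_ne_fin ht j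
      refine ⟨Sum.inl (inr k), by simp [hk], fun h => ?_⟩
      rw [subdiv_adj_inl_inl] at h
      exact not_bip_adj_rr _ _ h.1
    · obtain ⟨j0, hs0⟩ := F0_mem s.prop
      obtain ⟨k, hk⟩ := exists_ne_fin ht j0
      refine ⟨Sum.inl (inr k), by simp, fun h => ?_⟩
      obtain ⟨u, hu, hul⟩ := subdiv_adj_inr _ _ _ _ h.symm
      have : u = Sum.inr k := (Sum.inl.inj hul).symm
      subst this
      rw [hs0] at hu
      simp only [Sym2.mem_iff] at hu
      rcases hu with hu | hu
      · simp at hu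
      · exact hk (Sum.inr.inj hu)

end assemble


theorem stmt7 (t : ℕ) (ht : 2 ≤ t) :
    (completeBipartiteGraph (Fin 2) (Fin t)).IsQCritical (t + 1) := by
  constructor
  · intro F hFsub hFcard
    rw [domNum_bip ht]
    have h3 : 3 ≤ ((completeBipartiteGraph (Fin 2) (Fin t)).subdiv F).domNum :=
      le_domNum _ 3 (fun D hD =>
        three_le_of_dom _ (fun x y => noPair ht F hFsub hFcard x y) D hD)
    omega
  · refine ⟨F0 t, F0_sub, by rw [F0_card]; omega, ?_⟩
    rw [subdiv_F0_domNum ht, domNum_bip ht]
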